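/- Define I_L(ℰ) := (√2/π) ∫_{φ=−arccos(ℰ)}^{arccos(ℰ)} √(cos φ − ℰ) dφ for −1 < ℰ < 1, and I_R(ℰ) := (1/(√2·π)) ∫_{φ=−π}^{π} √(cos φ − ℰ) dφ for ℰ < −1. Then the second derivative of I_L is strictly positive at every ℰ ∈ (−1,1), while the second derivative of I_R is strictly negative at every ℰ ∈ (−∞,−1). -/

import Mathlib

open MeasureTheory Real

/-- The librational averaged action integral
`I_L(ℰ) = (√2/π) ∫_{−arccos ℰ}^{arccos ℰ} √(cos φ − ℰ) dφ`, for `−1 < ℰ < 1`. -/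
noncomputable def I_L (E : ℝ) : ℝ :=
  (Real.sqrt 2 / Real.pi) *
    ∫ φ in (-(Real.arccos E))..(Real.arccos E), Real.sqrt (Real.cos φ - E)

/-- The rotational averaged action integral
`I_R(ℰ) = (1/(√2 π)) ∫_{−π}^{π} √(cos φ − ℰ) dφ`, for `ℰ < −1`. -/
noncomputable def I_R (E : ℝ) : ℝ :=
  (1 / (Real.sqrt 2 * Real.pi)) *
    ∫ φ in (-Real.pi)..Real.pi, Real.sqrt (Real.cos φ - E)

open intervalIntegral Set

lemma hasDerivAt_intervalIntegral {F F' : ℝ → ℝ → ℝ} {a b x₀ ε C : ℝ} (hε : 0 < ε)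
    (hFc : ∀ x ∈ Metric.ball x₀ ε, Continuous (F x))
    (hF'c : Continuous (F' x₀))
    (hbound : ∀ t ∈ Set.uIcc a b, ∀ x ∈ Metric.ball x₀ ε, |F' x t| ≤ C)
    (hdiff : ∀ t ∈ Set.uIcc a b, ∀ x ∈ Metric.ball x₀ ε, HasDerivAt (fun y => F y t) (F' x t) x) :
    HasDerivAt (fun x => ∫ t in a..b, F x t) (∫ t in a..b, F' x₀ t) x₀ := by
  refine (intervalIntegral.hasDerivAt_integral_of_dominated_loc_of_deriv_le (bound := fun _ => C)
    (Metric.ball_mem_nhds x₀ hε) ?_ ?_ ?_ ?_ ?_ ?_).2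
  · exact Filter.eventually_of_mem (Metric.ball_mem_nhds x₀ hε)
      (fun x hx => (hFc x hx).aestronglyMeasurable)
  · exact (hFc x₀ (Metric.mem_ball_self hε)).intervalIntegrable _ _
  · exact hF'c.aestronglyMeasurable
  · exact Filter.Eventually.of_forall fun t ht x hx => by
      simpa [Real.norm_eq_abs] using hbound t (uIoc_subset_uIcc ht) x hx
  · exact intervalIntegrable_const
  · exact Filter.Eventually.of_forall fun t ht x hx => hdiff t (uIoc_subset_uIcc ht) x hx

lemma lin_hasDeriv (c x : ℝ) : HasDerivAt (fun y : ℝ => c - y) (-1) x := by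
  simpa using (hasDerivAt_id x).const_sub c

lemma sqrt_hasDeriv {c x : ℝ} (h : 0 < c - x) :
    HasDerivAt (fun y => Real.sqrt (c - y)) (-(1/2 : ℝ) * (c - x) ^ (-(1/2) : ℝ)) x := by
  simp only [Real.sqrt_eq_rpow]
  have := (lin_hasDeriv c x).rpow_const (p := (1/2 : ℝ)) (Or.inl h.ne')
  convert this using 1
  rw [show ((1:ℝ)/2 - 1 : ℝ) = -(1/2) by norm_num]
  ring

lemma rpow_half_hasDeriv {c x : ℝ} (h : 0 < c - x) :
    HasDerivAt (fun y => -(1/2 : ℝ) * (c - y) ^ (-(1/2) : ℝ))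
      (-(1/4 : ℝ) * (c - x) ^ (-(3/2) : ℝ)) x := by
  have := ((lin_hasDeriv c x).rpow_const (p := (-(1/2) : ℝ)) (Or.inl h.ne')).const_mul (-(1/2 : ℝ))
  refine this.congr_deriv ?_
  rw [show (-((1:ℝ)/2) - 1 : ℝ) = -(3/2) by norm_num]
  ring

noncomputable def DR1 (E : ℝ) : ℝ :=
  ∫ φ in (-Real.pi)..Real.pi, -(1/2 : ℝ) * (Real.cos φ - E) ^ (-(1/2) : ℝ)
noncomputable def DR2 (E : ℝ) : ℝ :=
  ∫ φ in (-Real.pi)..Real.pi, -(1/4 : ℝ) * (Real.cos φ - E) ^ (-(3/2) : ℝ)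

/-- key positivity: if `x` is within `(-1-E)/2` of `E < -1` then `cos φ - x ≥ (-1-E)/2`. -/
lemma cos_sub_lb {E x : ℝ} (hE : E < -1) (hx : x ∈ Metric.ball E ((-1 - E)/2)) (φ : ℝ) :
    (-1 - E)/2 ≤ Real.cos φ - x := by
  have h1 : |x - E| < (-1 - E)/2 := by simpa [Metric.mem_ball, Real.dist_eq] using hx
  have h2 : x - E < (-1 - E)/2 := lt_of_abs_lt h1
  have := Real.neg_one_le_cos φ
  linarith

lemma cos_sub_pos {E : ℝ} (hE : E < -1) (φ : ℝ) : 0 < Real.cos φ - E := by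
  have := Real.neg_one_le_cos φ; linarith

lemma contR1 {x : ℝ} (hx : x < -1) :
    Continuous (fun φ => -(1/2 : ℝ) * (Real.cos φ - x) ^ (-(1/2) : ℝ)) :=
  continuous_const.mul ((Real.continuous_cos.sub continuous_const).rpow_const
    (fun φ => Or.inl (cos_sub_pos hx φ).ne'))

lemma contR2 {x : ℝ} (hx : x < -1) :
    Continuous (fun φ => -(1/4 : ℝ) * (Real.cos φ - x) ^ (-(3/2) : ℝ)) :=
  continuous_const.mul ((Real.continuous_cos.sub continuous_const).rpow_const
    (fun φ => Or.inl (cos_sub_pos hx φ).ne'))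

lemma IR_deriv1 {E : ℝ} (hE : E < -1) :
    HasDerivAt (fun x => ∫ φ in (-Real.pi)..Real.pi, Real.sqrt (Real.cos φ - x)) (DR1 E) E := by
  set ε := (-1 - E)/2 with hεdef
  have hε : 0 < ε := by simp only [hεdef]; linarith
  refine hasDerivAt_intervalIntegral (F' := fun x φ => -(1/2 : ℝ) * (Real.cos φ - x) ^ (-(1/2) : ℝ))
    (C := (1/2 : ℝ) * ε ^ (-(1/2) : ℝ)) hε ?_ ?_ ?_ ?_
  · intro x _
    exact Real.continuous_cos.sub continuous_const |>.sqrt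
  · exact contR1 hE
  · intro φ _ x hx
    have hb := cos_sub_lb hE hx φ
    rw [abs_mul, abs_of_pos (Real.rpow_pos_of_pos (lt_of_lt_of_le hε hb) _)]
    have : (Real.cos φ - x) ^ (-(1/2) : ℝ) ≤ ε ^ (-(1/2) : ℝ) :=
      Real.rpow_le_rpow_of_nonpos hε hb (by norm_num)
    calc |(-(1/2 : ℝ))| * (Real.cos φ - x) ^ (-(1/2) : ℝ)
        = (1/2 : ℝ) * (Real.cos φ - x) ^ (-(1/2) : ℝ) := by norm_num
      _ ≤ (1/2 : ℝ) * ε ^ (-(1/2) : ℝ) := by nlinarith [Real.rpow_pos_of_pos hε (-(1/2) : ℝ)]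
  · intro φ _ x hx
    exact sqrt_hasDeriv (lt_of_lt_of_le hε (cos_sub_lb hE hx φ))

lemma IR_deriv2 {E : ℝ} (hE : E < -1) : HasDerivAt DR1 (DR2 E) E := by
  set ε := (-1 - E)/2 with hεdef
  have hε : 0 < ε := by simp only [hεdef]; linarith
  refine hasDerivAt_intervalIntegral
    (F' := fun x φ => -(1/4 : ℝ) * (Real.cos φ - x) ^ (-(3/2) : ℝ))
    (C := (1/4 : ℝ) * ε ^ (-(3/2) : ℝ)) hε ?_ ?_ ?_ ?_
  · intro x hx
    have hx1 : x < -1 := by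
      have := lt_of_abs_lt (by simpa [Metric.mem_ball, Real.dist_eq] using hx : |x - E| < ε)
      simp only [hεdef] at this; linarith
    exact contR1 hx1
  · exact contR2 hE
  · intro φ _ x hx
    have hb := cos_sub_lb hE hx φ
    rw [abs_mul, abs_of_pos (Real.rpow_pos_of_pos (lt_of_lt_of_le hε hb) _)]
    have : (Real.cos φ - x) ^ (-(3/2) : ℝ) ≤ ε ^ (-(3/2) : ℝ) :=
      Real.rpow_le_rpow_of_nonpos hε hb (by norm_num)
    calc |(-(1/4 : ℝ))| * (Real.cos φ - x) ^ (-(3/2) : ℝ)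
        = (1/4 : ℝ) * (Real.cos φ - x) ^ (-(3/2) : ℝ) := by norm_num
      _ ≤ (1/4 : ℝ) * ε ^ (-(3/2) : ℝ) := by nlinarith [Real.rpow_pos_of_pos hε (-(3/2) : ℝ)]
  · intro φ _ x hx
    exact rpow_half_hasDeriv (lt_of_lt_of_le hε (cos_sub_lb hE hx φ))

noncomputable def PhiL (m : ℝ) : ℝ :=
  ∫ θ in (-(Real.pi/2))..(Real.pi/2),
    m * Real.cos θ ^ 2 * (1 - m * Real.sin θ ^ 2) ^ (-(1/2) : ℝ)

noncomputable def PhiL1 (m : ℝ) : ℝ :=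
  ∫ θ in (-(Real.pi/2))..(Real.pi/2),
    Real.cos θ ^ 2 * ((1 - m * Real.sin θ ^ 2) ^ (-(1/2) : ℝ)
      + m * Real.sin θ ^ 2 / 2 * (1 - m * Real.sin θ ^ 2) ^ (-(3/2) : ℝ))

noncomputable def PhiL2 (m : ℝ) : ℝ :=
  ∫ θ in (-(Real.pi/2))..(Real.pi/2),
    Real.cos θ ^ 2 * (Real.sin θ ^ 2 * (1 - m * Real.sin θ ^ 2) ^ (-(3/2) : ℝ)
      + 3/4 * m * (Real.sin θ ^ 2) ^ 2 * (1 - m * Real.sin θ ^ 2) ^ (-(5/2) : ℝ))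

-- basic facts on the ball
lemma ball_facts {m₀ x : ℝ} (h0 : 0 < m₀) (h1 : m₀ < 1)
    (hx : x ∈ Metric.ball m₀ (min m₀ (1 - m₀) / 2)) :
    0 < x ∧ x < 1 ∧ ∀ θ : ℝ, (1 - m₀) / 2 ≤ 1 - x * Real.sin θ ^ 2 := by
  have hε : |x - m₀| < min m₀ (1 - m₀) / 2 := by
    simpa [Metric.mem_ball, Real.dist_eq] using hx
  have h2 : x - m₀ < min m₀ (1 - m₀) / 2 := lt_of_abs_lt hε
  have h3 : -(min m₀ (1 - m₀) / 2) < x - m₀ := neg_lt_of_abs_lt hε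
  have hm1 : min m₀ (1 - m₀) ≤ m₀ := min_le_left _ _
  have hm2 : min m₀ (1 - m₀) ≤ 1 - m₀ := min_le_right _ _
  have hxpos : 0 < x := by linarith
  have hxlt : x < 1 := by nlinarith
  refine ⟨hxpos, hxlt, fun θ => ?_⟩
  have hs1 : Real.sin θ ^ 2 ≤ 1 := by
    have := Real.sin_sq_le_one θ; linarith
  have hs0 : 0 ≤ Real.sin θ ^ 2 := sq_nonneg _
  nlinarith

-- pointwise derivatives in m
lemma aff_hasDeriv (s x : ℝ) : HasDerivAt (fun y : ℝ => 1 - y * s) (-s) x := by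
  simpa using ((hasDerivAt_id x).mul_const s).const_sub 1

lemma phi_ptwise_deriv1 {x : ℝ} (θ : ℝ) (hA : 0 < 1 - x * Real.sin θ ^ 2) :
    HasDerivAt (fun y => y * Real.cos θ ^ 2 * (1 - y * Real.sin θ ^ 2) ^ (-(1/2) : ℝ))
      (Real.cos θ ^ 2 * ((1 - x * Real.sin θ ^ 2) ^ (-(1/2) : ℝ)
        + x * Real.sin θ ^ 2 / 2 * (1 - x * Real.sin θ ^ 2) ^ (-(3/2) : ℝ))) x := by
  have h2 := (aff_hasDeriv (Real.sin θ ^ 2) x).rpow_const (p := (-(1/2) : ℝ)) (Or.inl hA.ne')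
  have h3 := ((hasDerivAt_id x).mul_const (Real.cos θ ^ 2)).mul h2
  simp only [id_eq] at h3
  rw [show (-((1:ℝ)/2) - 1 : ℝ) = -(3/2) from by norm_num] at h3
  refine h3.congr_deriv ?_
  ring

lemma phi_ptwise_deriv2 {x : ℝ} (θ : ℝ) (hA : 0 < 1 - x * Real.sin θ ^ 2) :
    HasDerivAt (fun y => Real.cos θ ^ 2 * ((1 - y * Real.sin θ ^ 2) ^ (-(1/2) : ℝ)
        + y * Real.sin θ ^ 2 / 2 * (1 - y * Real.sin θ ^ 2) ^ (-(3/2) : ℝ)))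
      (Real.cos θ ^ 2 * (Real.sin θ ^ 2 * (1 - x * Real.sin θ ^ 2) ^ (-(3/2) : ℝ)
        + 3/4 * x * (Real.sin θ ^ 2) ^ 2 * (1 - x * Real.sin θ ^ 2) ^ (-(5/2) : ℝ))) x := by
  have h2 := (aff_hasDeriv (Real.sin θ ^ 2) x).rpow_const (p := (-(1/2) : ℝ)) (Or.inl hA.ne')
  have h4 := (aff_hasDeriv (Real.sin θ ^ 2) x).rpow_const (p := (-(3/2) : ℝ)) (Or.inl hA.ne')
  have h5 := (((hasDerivAt_id x).mul_const (Real.sin θ ^ 2)).div_const 2).mul h4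
  have h6 := ((h2.add h5).const_mul (Real.cos θ ^ 2))
  simp only [id_eq] at h6
  rw [show (-((1:ℝ)/2) - 1 : ℝ) = -(3/2) from by norm_num,
    show (-((3:ℝ)/2) - 1 : ℝ) = -(5/2) from by norm_num] at h6
  refine h6.congr_deriv ?_
  ring

lemma Apos {x : ℝ} (h0 : 0 ≤ x) (h1 : x < 1) (θ : ℝ) : 0 < 1 - x * Real.sin θ ^ 2 := by
  nlinarith [Real.sin_sq_le_one θ, sq_nonneg (Real.sin θ)]

lemma contA {x : ℝ} : Continuous (fun θ => 1 - x * Real.sin θ ^ 2) :=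
  continuous_const.sub (continuous_const.mul (Real.continuous_sin.pow 2))

lemma contPhi {x : ℝ} (h0 : 0 ≤ x) (h1 : x < 1) :
    Continuous (fun θ => x * Real.cos θ ^ 2 * (1 - x * Real.sin θ ^ 2) ^ (-(1/2) : ℝ)) :=
  ((continuous_const.mul (Real.continuous_cos.pow 2)).mul
    (contA.rpow_const fun θ => Or.inl (Apos h0 h1 θ).ne'))

lemma contPhi1 {x : ℝ} (h0 : 0 ≤ x) (h1 : x < 1) :
    Continuous (fun θ => Real.cos θ ^ 2 * ((1 - x * Real.sin θ ^ 2) ^ (-(1/2) : ℝ)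
      + x * Real.sin θ ^ 2 / 2 * (1 - x * Real.sin θ ^ 2) ^ (-(3/2) : ℝ))) :=
  (Real.continuous_cos.pow 2).mul
    ((contA.rpow_const fun θ => Or.inl (Apos h0 h1 θ).ne').add
      (((continuous_const.mul (Real.continuous_sin.pow 2)).div_const 2).mul
        (contA.rpow_const fun θ => Or.inl (Apos h0 h1 θ).ne')))

lemma contPhi2 {x : ℝ} (h0 : 0 ≤ x) (h1 : x < 1) :
    Continuous (fun θ => Real.cos θ ^ 2 * (Real.sin θ ^ 2 * (1 - x * Real.sin θ ^ 2) ^ (-(3/2) : ℝ)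
      + 3/4 * x * (Real.sin θ ^ 2) ^ 2 * (1 - x * Real.sin θ ^ 2) ^ (-(5/2) : ℝ))) :=
  (Real.continuous_cos.pow 2).mul
    (((Real.continuous_sin.pow 2).mul
        (contA.rpow_const fun θ => Or.inl (Apos h0 h1 θ).ne')).add
      ((continuous_const.mul ((Real.continuous_sin.pow 2).pow 2)).mul
        (contA.rpow_const fun θ => Or.inl (Apos h0 h1 θ).ne')))

lemma PhiL_hasDeriv {m₀ : ℝ} (h0 : 0 < m₀) (h1 : m₀ < 1) : HasDerivAt PhiL (PhiL1 m₀) m₀ := by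
  have hε : 0 < min m₀ (1 - m₀) / 2 := by
    have : 0 < min m₀ (1 - m₀) := lt_min h0 (by linarith)
    linarith
  set δ := (1 - m₀) / 2 with hδ
  have hδpos : 0 < δ := by rw [hδ]; linarith
  unfold PhiL PhiL1
  refine hasDerivAt_intervalIntegral
    (F := fun x θ => x * Real.cos θ ^ 2 * (1 - x * Real.sin θ ^ 2) ^ (-(1/2) : ℝ))
    (F' := fun x θ => Real.cos θ ^ 2 * ((1 - x * Real.sin θ ^ 2) ^ (-(1/2) : ℝ)
      + x * Real.sin θ ^ 2 / 2 * (1 - x * Real.sin θ ^ 2) ^ (-(3/2) : ℝ)))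
    (C := δ ^ (-(1/2) : ℝ) + δ ^ (-(3/2) : ℝ)) hε ?_ ?_ ?_ ?_
  · intro x hx
    obtain ⟨hx0, hx1, _⟩ := ball_facts h0 h1 hx
    exact contPhi hx0.le hx1
  · exact contPhi1 h0.le h1
  · intro θ _ x hx
    obtain ⟨hx0, hx1, hA⟩ := ball_facts h0 h1 hx
    have hAθ := hA θ
    have hApos := Apos hx0.le hx1 θ
    have hr1 : (1 - x * Real.sin θ ^ 2) ^ (-(1/2) : ℝ) ≤ δ ^ (-(1/2) : ℝ) :=
      Real.rpow_le_rpow_of_nonpos hδpos hAθ (by norm_num)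
    have hr3 : (1 - x * Real.sin θ ^ 2) ^ (-(3/2) : ℝ) ≤ δ ^ (-(3/2) : ℝ) :=
      Real.rpow_le_rpow_of_nonpos hδpos hAθ (by norm_num)
    have hp1 := Real.rpow_pos_of_pos hApos (-(1/2) : ℝ)
    have hp3 := Real.rpow_pos_of_pos hApos (-(3/2) : ℝ)
    have hc : Real.cos θ ^ 2 ≤ 1 := by nlinarith [Real.cos_sq_le_one θ]
    have hc0 : (0:ℝ) ≤ Real.cos θ ^ 2 := sq_nonneg _
    have hs : Real.sin θ ^ 2 ≤ 1 := by nlinarith [Real.sin_sq_le_one θ]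
    have hs0 : (0:ℝ) ≤ Real.sin θ ^ 2 := sq_nonneg _
    rw [abs_of_nonneg]
    · have k1 : x * Real.sin θ ^ 2 / 2 * (1 - x * Real.sin θ ^ 2) ^ (-(3/2) : ℝ)
          ≤ δ ^ (-(3/2) : ℝ) := by nlinarith
      have k3 : (0:ℝ) ≤ (1 - x * Real.sin θ ^ 2) ^ (-(1/2) : ℝ)
          + x * Real.sin θ ^ 2 / 2 * (1 - x * Real.sin θ ^ 2) ^ (-(3/2) : ℝ) := by positivity
      have := mul_le_mul_of_nonneg_right hc k3
      linarith
    · positivity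
  · intro θ _ x hx
    obtain ⟨hx0, hx1, _⟩ := ball_facts h0 h1 hx
    exact phi_ptwise_deriv1 θ (Apos hx0.le hx1 θ)

lemma PhiL1_hasDeriv {m₀ : ℝ} (h0 : 0 < m₀) (h1 : m₀ < 1) : HasDerivAt PhiL1 (PhiL2 m₀) m₀ := by
  have hε : 0 < min m₀ (1 - m₀) / 2 := by
    have : 0 < min m₀ (1 - m₀) := lt_min h0 (by linarith)
    linarith
  set δ := (1 - m₀) / 2 with hδ
  have hδpos : 0 < δ := by rw [hδ]; linarith
  unfold PhiL1 PhiL2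
  refine hasDerivAt_intervalIntegral
    (F := fun x θ => Real.cos θ ^ 2 * ((1 - x * Real.sin θ ^ 2) ^ (-(1/2) : ℝ)
      + x * Real.sin θ ^ 2 / 2 * (1 - x * Real.sin θ ^ 2) ^ (-(3/2) : ℝ)))
    (F' := fun x θ => Real.cos θ ^ 2 * (Real.sin θ ^ 2 * (1 - x * Real.sin θ ^ 2) ^ (-(3/2) : ℝ)
      + 3/4 * x * (Real.sin θ ^ 2) ^ 2 * (1 - x * Real.sin θ ^ 2) ^ (-(5/2) : ℝ)))
    (C := δ ^ (-(3/2) : ℝ) + δ ^ (-(5/2) : ℝ)) hε ?_ ?_ ?_ ?_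
  · intro x hx
    obtain ⟨hx0, hx1, _⟩ := ball_facts h0 h1 hx
    exact contPhi1 hx0.le hx1
  · exact contPhi2 h0.le h1
  · intro θ _ x hx
    obtain ⟨hx0, hx1, hA⟩ := ball_facts h0 h1 hx
    have hAθ := hA θ
    have hApos := Apos hx0.le hx1 θ
    have hr3 : (1 - x * Real.sin θ ^ 2) ^ (-(3/2) : ℝ) ≤ δ ^ (-(3/2) : ℝ) :=
      Real.rpow_le_rpow_of_nonpos hδpos hAθ (by norm_num)
    have hr5 : (1 - x * Real.sin θ ^ 2) ^ (-(5/2) : ℝ) ≤ δ ^ (-(5/2) : ℝ) :=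
      Real.rpow_le_rpow_of_nonpos hδpos hAθ (by norm_num)
    have hp3 := Real.rpow_pos_of_pos hApos (-(3/2) : ℝ)
    have hp5 := Real.rpow_pos_of_pos hApos (-(5/2) : ℝ)
    have hc : Real.cos θ ^ 2 ≤ 1 := by nlinarith [Real.cos_sq_le_one θ]
    have hc0 : (0:ℝ) ≤ Real.cos θ ^ 2 := sq_nonneg _
    have hs : Real.sin θ ^ 2 ≤ 1 := by nlinarith [Real.sin_sq_le_one θ]
    have hs0 : (0:ℝ) ≤ Real.sin θ ^ 2 := sq_nonneg _
    have hs4 : (Real.sin θ ^ 2) ^ 2 ≤ 1 := by nlinarith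
    have hs40 : (0:ℝ) ≤ (Real.sin θ ^ 2) ^ 2 := sq_nonneg _
    rw [abs_of_nonneg]
    · have k1 : Real.sin θ ^ 2 * (1 - x * Real.sin θ ^ 2) ^ (-(3/2) : ℝ)
          ≤ δ ^ (-(3/2) : ℝ) := by nlinarith
      have t0 : (0:ℝ) ≤ 3/4 * x * (Real.sin θ ^ 2) ^ 2 := by positivity
      have t4 : 3/4 * x * (Real.sin θ ^ 2) ^ 2 ≤ 3/4 := by nlinarith
      have k2 : 3/4 * x * (Real.sin θ ^ 2) ^ 2 * (1 - x * Real.sin θ ^ 2) ^ (-(5/2) : ℝ)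
          ≤ δ ^ (-(5/2) : ℝ) := by
        have := mul_le_mul_of_nonneg_right t4 hp5.le
        linarith
      have k3 : (0:ℝ) ≤ Real.sin θ ^ 2 * (1 - x * Real.sin θ ^ 2) ^ (-(3/2) : ℝ)
          + 3/4 * x * (Real.sin θ ^ 2) ^ 2 * (1 - x * Real.sin θ ^ 2) ^ (-(5/2) : ℝ) := by
        positivity
      have := mul_le_mul_of_nonneg_right hc k3
      linarith
    · positivity
  · intro θ _ x hx
    obtain ⟨hx0, hx1, _⟩ := ball_facts h0 h1 hx
    exact phi_ptwise_deriv2 θ (Apos hx0.le hx1 θ)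

lemma PhiL2_pos {m : ℝ} (h0 : 0 < m) (h1 : m < 1) : 0 < PhiL2 m := by
  set f := fun θ => Real.cos θ ^ 2 * (Real.sin θ ^ 2 * (1 - m * Real.sin θ ^ 2) ^ (-(3/2) : ℝ)
      + 3/4 * m * (Real.sin θ ^ 2) ^ 2 * (1 - m * Real.sin θ ^ 2) ^ (-(5/2) : ℝ)) with hf
  have hcont : Continuous f := contPhi2 h0.le h1
  have hnonneg : ∀ θ, 0 ≤ f θ := by
    intro θ
    have hp3 := Real.rpow_pos_of_pos (Apos h0.le h1 θ) (-(3/2) : ℝ)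
    have hp5 := Real.rpow_pos_of_pos (Apos h0.le h1 θ) (-(5/2) : ℝ)
    have := sq_nonneg (Real.sin θ)
    have := sq_nonneg (Real.cos θ)
    rw [hf]
    positivity
  have hpi := Real.pi_pos
  have e1 := intervalIntegral.integral_add_adjacent_intervals (μ := volume)
    (hcont.intervalIntegrable (-(Real.pi/2)) (Real.pi/6))
    (hcont.intervalIntegrable (Real.pi/6) (Real.pi/2))
  have e2 := intervalIntegral.integral_add_adjacent_intervals (μ := volume)
    (hcont.intervalIntegrable (Real.pi/6) (Real.pi/3))
    (hcont.intervalIntegrable (Real.pi/3) (Real.pi/2))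
  have B1 : 0 ≤ ∫ θ in (-(Real.pi/2))..(Real.pi/6), f θ :=
    intervalIntegral.integral_nonneg (by linarith) (fun u _ => hnonneg u)
  have B3 : 0 ≤ ∫ θ in (Real.pi/3)..(Real.pi/2), f θ :=
    intervalIntegral.integral_nonneg (by linarith) (fun u _ => hnonneg u)
  have B2 : 0 < ∫ θ in (Real.pi/6)..(Real.pi/3), f θ := by
    refine intervalIntegral.intervalIntegral_pos_of_pos_on
      (hcont.intervalIntegrable _ _) ?_ (by linarith)
    intro θ hθ
    obtain ⟨hθ1, hθ2⟩ := hθ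
    have hcos : 0 < Real.cos θ := Real.cos_pos_of_mem_Ioo ⟨by linarith, by linarith⟩
    have hsin : 0 < Real.sin θ := Real.sin_pos_of_pos_of_lt_pi (by linarith) (by linarith)
    have hp3 := Real.rpow_pos_of_pos (Apos h0.le h1 θ) (-(3/2) : ℝ)
    have hp5 := Real.rpow_pos_of_pos (Apos h0.le h1 θ) (-(5/2) : ℝ)
    rw [hf]
    positivity
  have : PhiL2 m = ∫ θ in (-(Real.pi/2))..(Real.pi/2), f θ := rfl
  rw [this, ← e1, ← e2]
  linarith

lemma I_L_eq {E : ℝ} (h1 : -1 < E) (h2 : E < 1) :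
    I_L E = (4 / Real.pi) * PhiL ((1 - E) / 2) := by
  have hm0 : 0 < (1 - E) / 2 := by linarith
  set k := Real.sqrt ((1 - E) / 2) with hkdef
  have hk0 : 0 < k := Real.sqrt_pos.2 hm0
  have hksq : k ^ 2 = (1 - E) / 2 := Real.sq_sqrt hm0.le
  have hk1 : k < 1 := by nlinarith
  have hEeq : E = 1 - 2 * k ^ 2 := by rw [hksq]; ring
  have hX : ∀ θ : ℝ, 0 < 1 - k ^ 2 * Real.sin θ ^ 2 := by
    intro θ
    nlinarith [Real.sin_sq_le_one θ, sq_nonneg (Real.sin θ), sq_nonneg k]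
  set f := fun θ : ℝ => 2 * Real.arcsin (k * Real.sin θ) with hfdef
  set f' := fun θ : ℝ => 2 * k * Real.cos θ / Real.sqrt (1 - k ^ 2 * Real.sin θ ^ 2) with hf'def
  have hb : ∀ θ : ℝ, |k * Real.sin θ| < 1 := by
    intro θ
    rw [abs_mul, abs_of_pos hk0]
    calc k * |Real.sin θ| ≤ k * 1 := by
          have := Real.abs_sin_le_one θ
          nlinarith
      _ < 1 := by linarith
  have hf : ∀ θ ∈ Set.uIcc (-(Real.pi/2)) (Real.pi/2), HasDerivAt f (f' θ) θ := by
    intro θ _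
    have hne1 : k * Real.sin θ ≠ -1 := by
      intro h; have := hb θ; rw [h] at this; simp at this
    have hne2 : k * Real.sin θ ≠ 1 := by
      intro h; have := hb θ; rw [h] at this; simp at this
    have inner : HasDerivAt (fun θ => k * Real.sin θ) (k * Real.cos θ) θ :=
      (Real.hasDerivAt_sin θ).const_mul k
    have outer := Real.hasDerivAt_arcsin hne1 hne2
    have comp := (outer.comp θ inner).const_mul 2
    have hmp : (k * Real.sin θ) ^ 2 = k ^ 2 * Real.sin θ ^ 2 := by ring
    refine comp.congr_deriv ?_
    rw [hf'def]
    simp only []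
    rw [← hmp]
    field_simp
  have hf'cont : Continuous f' := by
    apply Continuous.div
    · exact (continuous_const.mul Real.continuous_cos)
    · exact ((continuous_const.sub (continuous_const.mul (Real.continuous_sin.pow 2))).sqrt)
    · intro θ
      exact (Real.sqrt_pos.2 (hX θ)).ne'
  have hg : Continuous (fun φ => Real.sqrt (Real.cos φ - E)) :=
    (Real.continuous_cos.sub continuous_const).sqrt
  have key := intervalIntegral.integral_comp_smul_deriv hf hf'cont.continuousOn hg
  -- endpoints
  have hend2 : f (Real.pi/2) = Real.arccos E := by
    have c1 : Real.cos (2 * Real.arcsin k) = E := by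
      rw [Real.cos_two_mul, Real.cos_arcsin,
        Real.sq_sqrt (by nlinarith : (0:ℝ) ≤ 1 - k ^ 2)]
      linarith
    have h0 : 0 ≤ 2 * Real.arcsin k := by
      have := Real.arcsin_nonneg.2 hk0.le; linarith
    have hπ : 2 * Real.arcsin k ≤ Real.pi := by
      have := Real.arcsin_le_pi_div_two k; linarith
    rw [hfdef]
    simp only [Real.sin_pi_div_two, mul_one]
    rw [← c1, Real.arccos_cos h0 hπ]
  have hend1 : f (-(Real.pi/2)) = -(Real.arccos E) := by
    rw [← hend2, hfdef]
    simp only [Real.sin_neg, Real.sin_pi_div_two, mul_neg, mul_one, Real.arcsin_neg]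
  rw [hend1, hend2] at key
  -- pointwise integrand equality
  have heq : ∀ θ ∈ Set.uIcc (-(Real.pi/2)) (Real.pi/2),
      f' θ • Real.sqrt (Real.cos (f θ) - E)
        = (2 * Real.sqrt 2) * (k ^ 2 * Real.cos θ ^ 2
            * (1 - k ^ 2 * Real.sin θ ^ 2) ^ (-(1/2) : ℝ)) := by
    intro θ hθ
    have hθ' : θ ∈ Set.Icc (-(Real.pi/2)) (Real.pi/2) := by
      rwa [Set.uIcc_of_le (by linarith [Real.pi_pos])] at hθ
    have hcos : 0 ≤ Real.cos θ := Real.cos_nonneg_of_mem_Icc hθ'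
    have hcosf : Real.cos (f θ) - E = 2 * (k * Real.cos θ) ^ 2 := by
      rw [hfdef]
      simp only []
      rw [Real.cos_two_mul, Real.cos_arcsin,
        Real.sq_sqrt (by nlinarith [hb θ, sq_abs (k * Real.sin θ), abs_nonneg (k * Real.sin θ)] :
          (0:ℝ) ≤ 1 - (k * Real.sin θ) ^ 2), hEeq]
      nlinarith [Real.sin_sq_add_cos_sq θ]
    have hsq : Real.sqrt (Real.cos (f θ) - E) = Real.sqrt 2 * (k * Real.cos θ) := by
      rw [hcosf, Real.sqrt_mul (by norm_num : (0:ℝ) ≤ 2),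
        Real.sqrt_sq (by positivity : (0:ℝ) ≤ k * Real.cos θ)]
    rw [smul_eq_mul, hsq, hf'def]
    simp only []
    rw [Real.rpow_neg (hX θ).le, ← Real.sqrt_eq_rpow]
    have hsne : Real.sqrt (1 - k ^ 2 * Real.sin θ ^ 2) ≠ 0 := (Real.sqrt_pos.2 (hX θ)).ne'
    field_simp
  simp only [Function.comp] at key
  rw [intervalIntegral.integral_congr heq, intervalIntegral.integral_const_mul] at key
  -- conclude
  rw [I_L, ← key]
  rw [show (1 - E) / 2 = k ^ 2 from hksq.symm, PhiL]
  have h2 : Real.sqrt 2 * Real.sqrt 2 = 2 := Real.mul_self_sqrt (by norm_num)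
  set I := ∫ θ in (-(Real.pi/2))..(Real.pi/2),
      k ^ 2 * Real.cos θ ^ 2 * (1 - k ^ 2 * Real.sin θ ^ 2) ^ (-(1/2) : ℝ) with hI
  field_simp
  linear_combination (2 * I) * h2

lemma IR_concave {E : ℝ} (hE : E < -1) : deriv (deriv I_R) E < 0 := by
  set c := 1 / (Real.sqrt 2 * Real.pi) with hc
  have hcpos : 0 < c := by
    rw [hc]
    positivity
  have h1 : ∀ x ∈ Set.Iio (-1 : ℝ), deriv I_R x = c * DR1 x := by
    intro x hx
    exact ((IR_deriv1 hx).const_mul c).deriv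
  have h2 : deriv I_R =ᶠ[nhds E] fun x => c * DR1 x :=
    Filter.eventually_of_mem (Iio_mem_nhds hE) h1
  have h3 : deriv (deriv I_R) E = deriv (fun x => c * DR1 x) E := h2.deriv_eq
  have h4 : deriv (fun x => c * DR1 x) E = c * DR2 E := ((IR_deriv2 hE).const_mul c).deriv
  have h5 : DR2 E < 0 := by
    have hpos : 0 < ∫ φ in (-Real.pi)..Real.pi, (1/4 : ℝ) * (Real.cos φ - E) ^ (-(3/2) : ℝ) := by
      refine intervalIntegral.intervalIntegral_pos_of_pos ?_ ?_ (by linarith [Real.pi_pos])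
      · have : Continuous (fun φ => (1/4 : ℝ) * (Real.cos φ - E) ^ (-(3/2) : ℝ)) := by
          have := (contR2 hE).neg
          exact this.congr (fun φ => by simp only [Pi.neg_apply]; ring)
        exact this.intervalIntegrable _ _
      · intro φ
        have := Real.rpow_pos_of_pos (cos_sub_pos hE φ) (-(3/2) : ℝ)
        positivity
    have : DR2 E = -∫ φ in (-Real.pi)..Real.pi, (1/4 : ℝ) * (Real.cos φ - E) ^ (-(3/2) : ℝ) := by
      rw [DR2, ← intervalIntegral.integral_neg]
      simp [neg_mul]
    linarith
  rw [h3, h4]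
  exact mul_neg_of_pos_of_neg hcpos h5

lemma inner_hasDeriv (E : ℝ) : HasDerivAt (fun y : ℝ => (1 - y)/2) (-(1/2)) E := by
  have := (lin_hasDeriv 1 E).div_const 2
  refine this.congr_deriv ?_
  norm_num

lemma IL_convex {E₀ : ℝ} (h1 : -1 < E₀) (h2 : E₀ < 1) : 0 < deriv (deriv I_L) E₀ := by
  have hm : ∀ E : ℝ, -1 < E → E < 1 → 0 < (1 - E)/2 ∧ (1 - E)/2 < 1 :=
    fun E a b => ⟨by linarith, by linarith⟩
  set G1 : ℝ → ℝ := fun E => (-2/Real.pi) * PhiL1 ((1 - E)/2) with hG1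
  have hderivIL : ∀ E ∈ Set.Ioo (-1:ℝ) 1, deriv I_L E = G1 E := by
    intro E hE
    obtain ⟨hm0, hm1⟩ := hm E hE.1 hE.2
    have hig : I_L =ᶠ[nhds E] fun x => (4/Real.pi) * PhiL ((1 - x)/2) :=
      Filter.eventually_of_mem (Ioo_mem_nhds hE.1 hE.2) (fun x hx => I_L_eq hx.1 hx.2)
    have hGd : HasDerivAt (fun x => (4/Real.pi) * PhiL ((1 - x)/2)) (G1 E) E := by
      have h := ((PhiL_hasDeriv hm0 hm1).comp E (inner_hasDeriv E)).const_mul (4/Real.pi)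
      simp only [Function.comp_def] at h
      refine h.congr_deriv ?_
      rw [hG1]
      field_simp
      ring
    rw [hig.deriv_eq, hGd.deriv]
  have heq2 : deriv I_L =ᶠ[nhds E₀] G1 :=
    Filter.eventually_of_mem (Ioo_mem_nhds h1 h2) hderivIL
  obtain ⟨hm0, hm1⟩ := hm E₀ h1 h2
  have hG1d : HasDerivAt G1 ((1/Real.pi) * PhiL2 ((1 - E₀)/2)) E₀ := by
    have h := ((PhiL1_hasDeriv hm0 hm1).comp E₀ (inner_hasDeriv E₀)).const_mul (-2/Real.pi)
    simp only [Function.comp_def] at h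
    refine h.congr_deriv ?_
    field_simp
  rw [heq2.deriv_eq, hG1d.deriv]
  have hp := PhiL2_pos hm0 hm1
  have hpi := Real.pi_pos
  positivity

/-- **Convexity/concavity of the averaged action integrals.**
The second derivative of `I_L` is strictly positive on `(−1,1)`, while the second
derivative of `I_R` is strictly negative on `(−∞,−1)`. -/
theorem I_L_convex_I_R_concave :
    (∀ E : ℝ, -1 < E → E < 1 → 0 < deriv (deriv I_L) E) ∧
    (∀ E : ℝ, E < -1 → deriv (deriv I_R) E < 0) := by
  exact ⟨fun E a b => IL_convex a b, fun E hE => IR_concave hE⟩
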